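/- Let s₁,…,s_n ∈ ℝ be calibration scores with positive weights w₁,…,w_n and W = Σᵢ wᵢ. For w > 0, the reweighted calibration distribution F̂(w) assigns probability wᵢ/(W + w) to the point sᵢ and probability w/(W + w) to +∞. For α ∈ (0,1), define the quantile Q_{1−α}(F̂(w)) as the infimum over all thresholds q ∈ ℝ ∪ {+∞} such that the total F̂(w)-mass of points ≤ q is at least 1 − α. Then for all 0 < w ≤ w', Q_{1−α}(F̂(w)) ≤ Q_{1−α}(F̂(w')). -/

import Mathlib

open Finset Classical

/-- Total `F̂(w)`-mass of points `≤ q`: the sum of the reweighted calibration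
weights of scores `sᵢ ≤ q`, plus the test-atom mass `w/(W+w)` when `q = +∞`. -/
noncomputable def rwMass {n : ℕ} (sc wts : Fin n → ℝ) (W w : ℝ) (q : EReal) : ℝ :=
  (∑ i, if (sc i : EReal) ≤ q then wts i / (W + w) else 0)
    + (if q = ⊤ then w / (W + w) else 0)

/-- The `(1-α)`-quantile of the reweighted calibration distribution `F̂(w)`:
the infimum of all thresholds `q ∈ ℝ ∪ {+∞}` whose `F̂(w)`-mass is at least `1 - α`. -/
noncomputable def rwQuantile {n : ℕ} (sc wts : Fin n → ℝ) (W α w : ℝ) : EReal :=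
  sInf {q : EReal | 1 - α ≤ rwMass sc wts W w q}

/-- Monotonicity of the weighted conformal quantile in the test-point weight. -/
theorem rwQuantile_mono
    {n : ℕ} (sc wts : Fin n → ℝ) (hw : ∀ i, 0 < wts i)
    (W : ℝ) (hW : W = ∑ i, wts i)
    (α : ℝ) (hα : α ∈ Set.Ioo (0 : ℝ) 1)
    (w w' : ℝ) (h0 : 0 < w) (hle : w ≤ w') :
    rwQuantile sc wts W α w ≤ rwQuantile sc wts W α w' := by
  have hW0 : 0 ≤ W := hW ▸ Finset.sum_nonneg (fun i _ => (hw i).le)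
  have h1 : 0 < W + w := by linarith
  have h2 : 0 < W + w' := by linarith
  apply sInf_le_sInf
  intro q hq
  simp only [Set.mem_setOf_eq] at *
  refine le_trans hq ?_
  by_cases hq' : q = ⊤
  · subst hq'
    have hall : ∀ i : Fin n, ((sc i : EReal) ≤ ⊤) := fun i => le_top
    simp only [rwMass, if_pos rfl, hall, if_true]
    have key : ∀ v : ℝ, W + v ≠ 0 → (∑ x, wts x / (W + v)) + v / (W + v) = 1 := by
      intro v hv; rw [← Finset.sum_div, ← hW, ← add_div, div_self hv]
    rw [key w h1.ne', key w' h2.ne']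
  · simp only [rwMass, if_neg hq', add_zero]
    apply Finset.sum_le_sum
    intro i _
    split
    · exact div_le_div_of_nonneg_left (hw i).le h1 (by linarith)
    · exact le_refl 0
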